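/- Let N be a matching class of morphisms in a category C. If n ∈ N is N-preadhesive, then n is a regular monomorphism. -/
import Mathlib


open CategoryTheory CategoryTheory.Limits

universe v u

variable {C : Type u} [Category.{v} C]

/-- A pushout square is *stable* if every pullback of it (in the sense of a
commutative cube all of whose vertical faces are pullbacks and whose bottom
face is the given square) has a pushout as its top face. -/
def StablePushout {X Y Z W : C} (f : X ⟶ Y) (g : X ⟶ Z) (inl : Y ⟶ W) (inr : Z ⟶ W) : Prop :=
  IsPushout f g inl inr ∧
  ∀ ⦃X' Y' Z' W' : C⦄ (f' : X' ⟶ Y') (g' : X' ⟶ Z') (inl' : Y' ⟶ W') (inr' : Z' ⟶ W')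
    (x : X' ⟶ X) (y : Y' ⟶ Y) (z : Z' ⟶ Z) (w : W' ⟶ W),
    f' ≫ inl' = g' ≫ inr' →
    IsPullback f' x y f → IsPullback g' x z g →
    IsPullback inl' y w inl → IsPullback inr' z w inr →
    IsPushout f' g' inl' inr'

/-- A pushout square is a *Van Kampen square* if for every commutative cube over it
whose back and left faces (the faces over the two span legs) are pullbacks, the top
face is a pushout iff the front and right faces are pullbacks. -/
def VanKampenSquare {X Y Z W : C} (f : X ⟶ Y) (g : X ⟶ Z) (inl : Y ⟶ W) (inr : Z ⟶ W) : Prop :=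
  IsPushout f g inl inr ∧
  ∀ ⦃X' Y' Z' W' : C⦄ (f' : X' ⟶ Y') (g' : X' ⟶ Z') (inl' : Y' ⟶ W') (inr' : Z' ⟶ W')
    (x : X' ⟶ X) (y : Y' ⟶ Y) (z : Z' ⟶ Z) (w : W' ⟶ W),
    f' ≫ inl' = g' ≫ inr' →
    IsPullback f' x y f → IsPullback g' x z g →
    inl' ≫ w = y ≫ inl → inr' ≫ w = z ≫ inr →
    (IsPushout f' g' inl' inr' ↔ (IsPullback inl' y w inl ∧ IsPullback inr' z w inr))

/-- A morphism `m : X ⟶ Y` is `N`-preadhesive if for every `n : X ⟶ Z` in `N` there is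
a stable pushout square of `m` along `n` which is also a pullback square. -/
def Preadhesive (N : MorphismProperty C) {X Y : C} (m : X ⟶ Y) : Prop :=
  ∀ ⦃Z : C⦄ (n : X ⟶ Z), N n →
    ∃ (W : C) (p : Z ⟶ W) (q : Y ⟶ W),
      StablePushout n m p q ∧ IsPullback n m p q

/-- A morphism is `N`-adhesive if all of its pullbacks are `N`-preadhesive. -/
def NAdhesive (N : MorphismProperty C) {X Y : C} (m : X ⟶ Y) : Prop :=
  ∀ ⦃X' Y' : C⦄ (m' : X' ⟶ Y') (x : X' ⟶ X) (y : Y' ⟶ Y),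
    IsPullback m' x y m → Preadhesive N m'

/-- A *matching class*: contains all isos, closed under composition and decomposition,
stable under pullbacks and pushouts. -/
structure MatchingClass (N : MorphismProperty C) : Prop where
  iso_mem : ∀ ⦃X Y : C⦄ (f : X ⟶ Y), IsIso f → N f
  comp_mem : ∀ ⦃X Y Z : C⦄ (f : X ⟶ Y) (g : Y ⟶ Z), N f → N g → N (f ≫ g)
  decomp : ∀ ⦃X Y Z : C⦄ (f : X ⟶ Y) (g : Y ⟶ Z), N (f ≫ g) → N g → N f
  pullback_stable : ∀ ⦃P X Y Z : C⦄ (fst : P ⟶ X) (snd : P ⟶ Y) (f : X ⟶ Z) (g : Y ⟶ Z),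
    IsPullback fst snd f g → N f → N snd
  pushout_stable : ∀ ⦃Z X Y P : C⦄ (f : Z ⟶ X) (g : Z ⟶ Y) (inl : X ⟶ P) (inr : Y ⟶ P),
    IsPushout f g inl inr → N g → N inl

/-- A *stable system of monos*. -/
structure StableSystem (M : MorphismProperty C) : Prop where
  mono : ∀ ⦃X Y : C⦄ (f : X ⟶ Y), M f → Mono f
  iso_mem : ∀ ⦃X Y : C⦄ (f : X ⟶ Y), IsIso f → M f
  comp_mem : ∀ ⦃X Y Z : C⦄ (f : X ⟶ Y) (g : Y ⟶ Z), M f → M g → M (f ≫ g)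
  pullback_stable : ∀ ⦃P X Y Z : C⦄ (fst : P ⟶ X) (snd : P ⟶ Y) (f : X ⟶ Z) (g : Y ⟶ Z),
    IsPullback fst snd f g → M f → M snd

/-- `C` is `M`-adhesive: `M`-pullbacks exist, and pushouts along arrows of `M`
(along arbitrary morphisms) exist and are Van Kampen squares. -/
def MAdhesive (M : MorphismProperty C) : Prop :=
  (∀ ⦃X Y Z : C⦄ (m : X ⟶ Y) (g : Z ⟶ Y), M m →
    ∃ (P : C) (p : P ⟶ X) (q : P ⟶ Z), IsPullback p q m g) ∧
  (∀ ⦃X Y Z : C⦄ (m : X ⟶ Y) (f : X ⟶ Z), M m →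
    ∃ (W : C) (inl : Z ⟶ W) (inr : Y ⟶ W), VanKampenSquare f m inl inr)

/-- The class of regular monomorphisms. -/
def RegMonos (C : Type u) [Category.{v} C] : MorphismProperty C :=
  fun _ _ f => Nonempty (RegularMono f)


/-- If `n ∈ N` is `N`-preadhesive, then `n` is a regular monomorphism. -/
theorem stmt5 (N : MorphismProperty C) (hN : MatchingClass N)
    {X Y : C} (n : X ⟶ Y) (hn : N n) (hp : Preadhesive N n) :
    Nonempty (RegularMono n) := by
  obtain ⟨W, p, q, hsp, hpb⟩ := hp n hn
  refine ⟨{ Z := W, left := p, right := q, w := hpb.w, isLimit := ?_ }⟩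
  refine Fork.IsLimit.mk _ (fun s => hpb.lift s.ι s.ι s.condition) ?_ ?_
  · intro s
    exact hpb.lift_fst _ _ _
  · intro s m hm
    apply hpb.hom_ext
    · rw [hpb.lift_fst]; simpa using hm
    · rw [hpb.lift_snd]; simpa using hm
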